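/- Let μ be a finite Borel measure on ℝ and α ∈ (0,1). Suppose that for every δ > 0 there exist mutually singular Borel measures μ₁^δ and μ₂^δ with μ = μ₁^δ + μ₂^δ, μ₁^δ uniformly α-Hölder singular, and μ₂^δ(ℝ) < δ. Then μ-essential supremum of the upper pointwise scaling exponent d_μ⁺ is at most α, where d_μ⁺(x) := limsup_{ε→0} ln μ(B(x;ε))/ln ε (set to +∞ if μ(B(x;ε)) = 0 for some ε > 0). -/

import Mathlib

open MeasureTheory Metric Set Filter
open scoped ENNReal Topology

open Classical in
/-- The upper pointwise scaling exponent `d_μ⁺(x)`, valued in `EReal`;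
`+∞` when some ball around `x` has zero measure. -/
noncomputable def dUpper (mu : Measure ℝ) (x : ℝ) : EReal :=
  if ∀ ε : ℝ, 0 < ε → 0 < mu (Metric.ball x ε) then
    Filter.limsup
      (fun r : ℝ => ((Real.log (mu (Metric.ball x r)).toReal / Real.log r : ℝ) : EReal))
      (nhdsWithin 0 (Set.Ioi 0))
  else ⊤

/-- `μ` is uniformly `α`-Hölder singular: there are `C > 0` and `0 < r₀ < 1` with
`μ(B(x;r)) ≥ C r^α` for all `0 < r < r₀` and `μ`-a.e. `x`. -/
def UnifHolderSing (mu : Measure ℝ) (alpha : ℝ) : Prop :=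
  ∃ C r₀ : ℝ, 0 < C ∧ 0 < r₀ ∧ r₀ < 1 ∧ ∀ r : ℝ, 0 < r → r < r₀ →
    ∀ᵐ x ∂mu, ENNReal.ofReal (C * r ^ alpha) ≤ mu (Metric.ball x r)

/-- Key pointwise lemma: if `μ(B(x;r)) ≥ C' r^α` for all small `r`, then
`dUpper μ x ≤ α`. -/
lemma dUpper_le_of_lower_bound (mu : Measure ℝ) [IsFiniteMeasure mu]
    {alpha C' r₀ : ℝ} (hα : 0 < alpha) (hC' : 0 < C') (hr₀ : 0 < r₀) (hr₁ : r₀ < 1)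
    {x : ℝ} (H : ∀ r : ℝ, 0 < r → r < r₀ →
      ENNReal.ofReal (C' * r ^ alpha) ≤ mu (Metric.ball x r)) :
    dUpper mu x ≤ (alpha : EReal) := by
  have hpos : ∀ ε : ℝ, 0 < ε → 0 < mu (Metric.ball x ε) := by
    intro ε hε
    set r := min ε r₀ / 2 with hrdef
    have hr : 0 < r := half_pos (lt_min hε hr₀)
    have hrr₀ : r < r₀ := by
      have h2 : r ≤ r₀ / 2 := by
        rw [hrdef]; gcongr; exact min_le_right _ _
      linarith
    have hrε : r ≤ ε :=
      le_trans (half_le_self (le_min hε.le hr₀.le)) (min_le_left ε r₀)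
    calc (0:ℝ≥0∞) < ENNReal.ofReal (C' * r ^ alpha) :=
          ENNReal.ofReal_pos.2 (by positivity)
      _ ≤ mu (Metric.ball x r) := H r hr hrr₀
      _ ≤ mu (Metric.ball x ε) := measure_mono (ball_subset_ball hrε)
  rw [dUpper, if_pos hpos]
  have hdiv0 : Tendsto (fun y : ℝ => Real.log C' / y) atBot (𝓝 0) := by
    have h1 : Tendsto (fun y : ℝ => (-Real.log C') / (-y)) atBot (𝓝 0) :=
      Tendsto.div_atTop tendsto_const_nhds tendsto_neg_atBot_atTop
    simpa [neg_div_neg_eq] using h1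
  have hg : Tendsto (fun r : ℝ => Real.log C' / Real.log r + alpha)
      (𝓝[>] (0:ℝ)) (𝓝 (0 + alpha)) :=
    Tendsto.add (hdiv0.comp Real.tendsto_log_nhdsGT_zero) tendsto_const_nhds
  have hEg : Tendsto (fun r : ℝ => ((Real.log C' / Real.log r + alpha : ℝ) : EReal))
      (𝓝[>] (0:ℝ)) (𝓝 ((alpha : ℝ) : EReal)) := by
    rw [EReal.tendsto_coe]; simpa using hg
  have hev : ∀ᶠ r in 𝓝[>] (0:ℝ),
      ((Real.log (mu (Metric.ball x r)).toReal / Real.log r : ℝ) : EReal)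
        ≤ ((Real.log C' / Real.log r + alpha : ℝ) : EReal) := by
    have hmem : Set.Ioo (0:ℝ) (min r₀ 1) ∈ 𝓝[>] (0:ℝ) :=
      Ioo_mem_nhdsGT_of_mem ⟨le_refl 0, lt_min hr₀ one_pos⟩
    filter_upwards [hmem] with r hr
    obtain ⟨hr0, hrm⟩ := hr
    have hrr₀ : r < r₀ := lt_of_lt_of_le hrm (min_le_left _ _)
    have hr1 : r < 1 := lt_of_lt_of_le hrm (min_le_right _ _)
    have hlr : Real.log r < 0 := Real.log_neg hr0 hr1
    have hfin : mu (Metric.ball x r) ≠ ⊤ := measure_ne_top mu _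
    have hle : C' * r ^ alpha ≤ (mu (Metric.ball x r)).toReal :=
      (ENNReal.ofReal_le_iff_le_toReal hfin).1 (H r hr0 hrr₀)
    have hlogle : Real.log C' + alpha * Real.log r
        ≤ Real.log (mu (Metric.ball x r)).toReal := by
      have h1 : Real.log (C' * r ^ alpha) ≤ Real.log (mu (Metric.ball x r)).toReal :=
        Real.log_le_log (by positivity) hle
      rwa [Real.log_mul (ne_of_gt hC') (by positivity), Real.log_rpow hr0] at h1
    have hdiv : Real.log (mu (Metric.ball x r)).toReal / Real.log r
        ≤ (Real.log C' + alpha * Real.log r) / Real.log r :=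
      div_le_div_of_nonpos_of_le hlr.le hlogle
    have heq : (Real.log C' + alpha * Real.log r) / Real.log r
        = Real.log C' / Real.log r + alpha := by
      rw [add_div, mul_div_assoc, div_self (ne_of_lt hlr), mul_one]
    exact EReal.coe_le_coe_iff.2 (by rw [← heq]; exact hdiv)
  calc Filter.limsup
        (fun r : ℝ => ((Real.log (mu (Metric.ball x r)).toReal / Real.log r : ℝ) : EReal))
        (𝓝[>] (0:ℝ))
      ≤ Filter.limsup
        (fun r : ℝ => ((Real.log C' / Real.log r + alpha : ℝ) : EReal)) (𝓝[>] (0:ℝ)) :=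
        Filter.limsup_le_limsup hev
    _ = ((alpha : ℝ) : EReal) := hEg.limsup_eq

theorem decomposition_essSup_le (mu : Measure ℝ) [IsFiniteMeasure mu]
    (alpha : ℝ) (halpha : alpha ∈ Set.Ioo (0:ℝ) 1)
    (h : ∀ δ : ℝ, 0 < δ → ∃ mu₁ mu₂ : Measure ℝ,
      mu = mu₁ + mu₂ ∧ Measure.MutuallySingular mu₁ mu₂ ∧
      UnifHolderSing mu₁ alpha ∧ mu₂ Set.univ < ENNReal.ofReal δ) :
    essSup (dUpper mu) mu ≤ (alpha : EReal) := by
  set S := {x : ℝ | ¬ dUpper mu x ≤ (alpha : EReal)} with hS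
  have hae : ∀ δ : ℝ, 0 < δ → mu S ≤ ENNReal.ofReal δ := by
    intro δ hδ
    obtain ⟨mu₁, mu₂, hsum, -, ⟨C, r₀, hC, hr₀, hr₁, hH⟩, hlt⟩ := h δ hδ
    have hQ : ∀ᵐ x ∂mu₁, ∀ q : ℚ, 0 < (q:ℝ) → (q:ℝ) < r₀ →
        ENNReal.ofReal (C * (q:ℝ) ^ alpha) ≤ mu₁ (Metric.ball x q) := by
      rw [ae_all_iff]
      intro q
      by_cases h1 : 0 < (q:ℝ) ∧ (q:ℝ) < r₀
      · filter_upwards [hH q h1.1 h1.2] with x hx _ _ using hx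
      · filter_upwards with x hq hq' using absurd ⟨hq, hq'⟩ h1
    have hmu1 : ∀ᵐ x ∂mu₁, dUpper mu x ≤ (alpha : EReal) := by
      filter_upwards [hQ] with x hx
      refine dUpper_le_of_lower_bound mu halpha.1
        (show (0:ℝ) < C / 2 ^ alpha by positivity) hr₀ hr₁ ?_
      intro r hr hrr₀
      obtain ⟨q, hq1, hq2⟩ := exists_rat_btwn (half_lt_self hr)
      have hq0 : 0 < (q:ℝ) := lt_trans (half_pos hr) hq1
      have hqr₀ : (q:ℝ) < r₀ := hq2.trans hrr₀
      calc ENNReal.ofReal (C / 2 ^ alpha * r ^ alpha)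
          ≤ ENNReal.ofReal (C * (q:ℝ) ^ alpha) := by
            apply ENNReal.ofReal_le_ofReal
            have hpow : (r / 2) ^ alpha ≤ (q:ℝ) ^ alpha :=
              Real.rpow_le_rpow (by positivity) hq1.le halpha.1.le
            calc C / 2 ^ alpha * r ^ alpha = C * (r / 2) ^ alpha := by
                  rw [Real.div_rpow hr.le (by norm_num : (0:ℝ) ≤ 2)]; ring
              _ ≤ C * (q:ℝ) ^ alpha := by
                  exact mul_le_mul_of_nonneg_left hpow hC.le
        _ ≤ mu₁ (Metric.ball x q) := hx q hq0 hqr₀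
        _ ≤ mu₁ (Metric.ball x r) := measure_mono (ball_subset_ball hq2.le)
        _ ≤ mu (Metric.ball x r) := by
            rw [hsum, Measure.add_apply]; exact le_self_add
    have h1 : mu₁ S = 0 := hmu1
    calc mu S = mu₁ S + mu₂ S := by rw [hsum, Measure.add_apply]
      _ ≤ 0 + mu₂ Set.univ := add_le_add h1.le (measure_mono (Set.subset_univ _))
      _ ≤ ENNReal.ofReal δ := by rw [zero_add]; exact hlt.le
  have hzero : mu S = 0 := by
    refine le_antisymm ?_ zero_le
    refine ENNReal.le_of_forall_pos_le_add fun ε hε _ => ?_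
    calc mu S ≤ ENNReal.ofReal ε := hae ε hε
      _ = (ε : ℝ≥0∞) := ENNReal.ofReal_coe_nnreal
      _ ≤ 0 + ε := by rw [zero_add]
  exact essSup_le_of_ae_le _ (by rw [Filter.EventuallyLE]; exact ae_iff.2 hzero)
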